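/- Let x_u, x_v ∈ [0,1], let x = d_L(x_u, x_v), and let r ∈ [0, 1/2]. If x + 2r ≤ 1, then the Lebesgue measure of the set {z ∈ [0,1] : d_L(z, x_u) ≤ r or d_L(z, x_v) ≤ r} equals min(2r + x, 4r); in particular it equals 2r + x when x ≤ 2r and equals 4r when x > 2r. -/

import Mathlib

open MeasureTheory

/-- The circular distance on `[0,1]`. -/
noncomputable def dL (x y : ℝ) : ℝ := min |x - y| (1 - |x - y|)

lemma dL_comm (x y : ℝ) : dL x y = dL y x := by
  unfold dL; rw [abs_sub_comm]

/-- Characterization of circular balls as unions of real intervals. -/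
lemma dL_ball_iff {z c r : ℝ} (hz0 : 0 ≤ z) (hz1 : z ≤ 1) (hc0 : 0 ≤ c)
    (hc1 : c ≤ 1) (hr2 : r ≤ 1/2) :
    dL z c ≤ r ↔ ∃ n : ℤ, c + n - r ≤ z ∧ z ≤ c + n + r := by
  unfold dL
  constructor
  · intro h
    rcases le_or_gt |z - c| r with h0 | h0
    · rcases abs_le.mp h0 with ⟨h1, h2⟩
      exact ⟨0, by push_cast; constructor <;> linarith⟩
    · have h1 : 1 - |z - c| ≤ r := by
        rcases min_le_iff.mp h with h' | h'
        · linarith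
        · exact h'
      rcases le_or_gt c z with hzc | hzc
      · have habs : |z - c| = z - c := abs_of_nonneg (by linarith)
        exact ⟨1, by push_cast; constructor <;> linarith⟩
      · have habs : |z - c| = -(z - c) := abs_of_neg (by linarith)
        exact ⟨-1, by push_cast; constructor <;> linarith⟩
  · rintro ⟨n, h1, h2⟩
    have hr0 : 0 ≤ r := by
      by_contra hneg
      push_neg at hneg
      nlinarith [Int.fract_nonneg (0:ℝ)]
    have hub : (n : ℝ) < 2 := by linarith
    have hlb : (-2 : ℝ) < (n : ℝ) := by linarith
    have hub' : n < 2 := by exact_mod_cast hub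
    have hlb' : (-2 : ℤ) < n := by exact_mod_cast hlb
    interval_cases n <;> push_cast at h1 h2
    · -- n = -1
      have habs : |z - c| = -(z - c) := abs_of_neg (by linarith)
      exact le_trans (min_le_right _ _) (by rw [habs]; linarith)
    · -- n = 0
      exact le_trans (min_le_left _ _) (abs_le.mpr ⟨by linarith, by linarith⟩)
    · -- n = 1
      have habs : |z - c| = z - c := abs_of_nonneg (by linarith)
      exact le_trans (min_le_right _ _) (by rw [habs]; linarith)

lemma gbm_key (xu xv r : ℝ)
    (h0u : 0 ≤ xu) (h1u : xu ≤ 1) (h0v : 0 ≤ xv) (h1v : xv ≤ 1)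
    (hr0 : 0 ≤ r) (hr2 : r ≤ 1/2) (hle : xu ≤ xv)
    (hx : dL xu xv + 2 * r ≤ 1) :
    volume {z : ℝ | z ∈ Set.Icc (0 : ℝ) 1 ∧ (dL z xu ≤ r ∨ dL z xv ≤ r)}
      = ENNReal.ofReal (min (2 * r + dL xu xv) (4 * r)) := by
  have hd0 : 0 ≤ xv - xu := by linarith
  have hd1 : xv - xu ≤ 1 := by linarith
  have habs : |xu - xv| = xv - xu := by
    rw [abs_sub_comm]; exact abs_of_nonneg hd0
  have hdL : dL xu xv = min (xv - xu) (1 - (xv - xu)) := by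
    unfold dL; rw [habs]
  -- The periodic set
  set S : Set ℝ := ⋃ n : ℤ,
      (Set.Icc (xu + n - r) (xu + n + r) ∪ Set.Icc (xv + n - r) (xv + n + r)) with hSdef
  have hSmeas : MeasurableSet S :=
    MeasurableSet.iUnion fun n => measurableSet_Icc.union measurableSet_Icc
  have hSmem : ∀ z : ℝ, z ∈ S ↔
      ((∃ n : ℤ, xu + n - r ≤ z ∧ z ≤ xu + n + r) ∨
       (∃ n : ℤ, xv + n - r ≤ z ∧ z ≤ xv + n + r)) := by
    intro z
    simp only [hSdef, Set.mem_iUnion, Set.mem_union, Set.mem_Icc, exists_or]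
  have hSper : ∀ z : ℝ, z + 1 ∈ S ↔ z ∈ S := by
    intro z
    rw [hSmem, hSmem]
    constructor
    · rintro (⟨n, h1, h2⟩ | ⟨n, h1, h2⟩)
      · exact Or.inl ⟨n - 1, by push_cast; constructor <;> linarith⟩
      · exact Or.inr ⟨n - 1, by push_cast; constructor <;> linarith⟩
    · rintro (⟨n, h1, h2⟩ | ⟨n, h1, h2⟩)
      · exact Or.inl ⟨n + 1, by push_cast; constructor <;> linarith⟩
      · exact Or.inr ⟨n + 1, by push_cast; constructor <;> linarith⟩
  -- Step 1: identify the set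
  have hset : {z : ℝ | z ∈ Set.Icc (0 : ℝ) 1 ∧ (dL z xu ≤ r ∨ dL z xv ≤ r)}
      = S ∩ Set.Icc 0 1 := by
    ext z
    simp only [Set.mem_setOf_eq, Set.mem_inter_iff, Set.mem_Icc]
    constructor
    · rintro ⟨⟨hz0, hz1⟩, h⟩
      refine ⟨(hSmem z).mpr ?_, hz0, hz1⟩
      rcases h with h | h
      · exact Or.inl ((dL_ball_iff hz0 hz1 h0u h1u hr2).mp h)
      · exact Or.inr ((dL_ball_iff hz0 hz1 h0v h1v hr2).mp h)
    · rintro ⟨hzS, hz0, hz1⟩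
      refine ⟨⟨hz0, hz1⟩, ?_⟩
      rcases (hSmem z).mp hzS with h | h
      · exact Or.inl ((dL_ball_iff hz0 hz1 h0u h1u hr2).mpr h)
      · exact Or.inr ((dL_ball_iff hz0 hz1 h0v h1v hr2).mpr h)
  -- Step 2: Icc → Ioc
  have hIcc : volume (S ∩ Set.Icc (0:ℝ) 1) = volume (S ∩ Set.Ioc (0:ℝ) 1) := by
    refine le_antisymm ?_
      (measure_mono (Set.inter_subset_inter_right _ Set.Ioc_subset_Icc_self))
    have h1 : S ∩ Set.Icc (0:ℝ) 1 ⊆ (S ∩ Set.Ioc (0:ℝ) 1) ∪ {0} := by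
      rintro z ⟨hzS, hz0, hz1⟩
      rcases eq_or_lt_of_le hz0 with h | h
      · exact Or.inr (by simp [← h])
      · exact Or.inl ⟨hzS, h, hz1⟩
    calc volume (S ∩ Set.Icc (0:ℝ) 1) ≤ volume ((S ∩ Set.Ioc (0:ℝ) 1) ∪ {0}) :=
          measure_mono h1
    _ ≤ volume (S ∩ Set.Ioc (0:ℝ) 1) + volume ({0} : Set ℝ) := measure_union_le _ _
    _ = volume (S ∩ Set.Ioc (0:ℝ) 1) := by rw [Real.volume_singleton, add_zero]
  -- Step 3: translate the window
  have hper : Function.Periodic (S.indicator (fun _ => (1:ℝ))) 1 := by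
    intro z
    by_cases h : z ∈ S
    · rw [Set.indicator_of_mem h, Set.indicator_of_mem ((hSper z).mpr h)]
    · rw [Set.indicator_of_notMem h,
        Set.indicator_of_notMem (fun hc => h ((hSper z).mp hc))]
  have hind : ∀ b : ℝ, ∫ z in b..(b+1), S.indicator (fun _ => (1:ℝ)) z
      = (volume (S ∩ Set.Ioc b (b+1))).toReal := by
    intro b
    rw [intervalIntegral.integral_of_le (by linarith), integral_indicator hSmeas,
      setIntegral_const, measureReal_def, Measure.restrict_apply hSmeas, smul_eq_mul, mul_one]
  have hfin : ∀ b : ℝ, volume (S ∩ Set.Ioc b (b+1)) ≠ ⊤ := by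
    intro b
    refine ((measure_mono Set.inter_subset_right).trans_lt ?_).ne
    rw [Real.volume_Ioc]
    exact ENNReal.ofReal_lt_top
  have hwin : volume (S ∩ Set.Ioc (0:ℝ) 1)
      = volume (S ∩ Set.Ioc (xu - r) (xu - r + 1)) := by
    have h := hper.intervalIntegral_add_eq 0 (xu - r)
    rw [hind 0, hind (xu - r)] at h
    have h01 : (0:ℝ) + 1 = 1 := by norm_num
    rw [h01] at h
    exact (ENNReal.toReal_eq_toReal_iff' (by rw [← h01]; exact hfin 0) (hfin _)).mp h
  -- Step 4: identify the set within the window, up to two points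
  set m : ℝ := min (xv + r) (xu + 1 - r) with hm
  set T : Set ℝ := Set.Ioc (xu - r) (xu + r) ∪ Set.Ioc (xv - r) m with hT
  have hm1 : m ≤ xv + r := min_le_left _ _
  have hm2 : m ≤ xu + 1 - r := min_le_right _ _
  have hTsub : T ⊆ S ∩ Set.Ioc (xu - r) (xu - r + 1) := by
    rintro z (⟨h1, h2⟩ | ⟨h1, h2⟩)
    · exact ⟨(hSmem z).mpr (Or.inl ⟨0, by push_cast; constructor <;> linarith⟩),
        h1, by linarith⟩
    · exact ⟨(hSmem z).mpr (Or.inr ⟨0, by push_cast; constructor <;> linarith⟩),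
        by linarith, by linarith⟩
  have hsub2 : S ∩ Set.Ioc (xu - r) (xu - r + 1)
      ⊆ T ∪ {xu + 1 - r, xv - r} := by
    rintro z ⟨hzS, hz1, hz2⟩
    rcases (hSmem z).mp hzS with ⟨n, h1, h2⟩ | ⟨n, h1, h2⟩
    · -- ball around xu : n ∈ {0, 1}
      have hnlb : (-1 : ℤ) < n := by
        have : (-1 : ℝ) < (n : ℝ) := by linarith
        exact_mod_cast this
      have hnub : n < 2 := by
        have : (n : ℝ) < 2 := by linarith
        exact_mod_cast this
      interval_cases n <;> push_cast at h1 h2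
      · exact Or.inl (Or.inl ⟨hz1, by linarith⟩)
      · have hz : z = xu + 1 - r := le_antisymm (by linarith) (by linarith)
        exact Or.inr (by simp [hz])
    · -- ball around xv : n ∈ {-1, 0, 1}
      have hnlb : (-2 : ℤ) < n := by
        have : (-2 : ℝ) < (n : ℝ) := by linarith
        exact_mod_cast this
      have hnub : n < 2 := by
        have : (n : ℝ) < 2 := by linarith
        exact_mod_cast this
      interval_cases n <;> push_cast at h1 h2
      · -- n = -1 : contained in the left interval
        exact Or.inl (Or.inl ⟨hz1, by linarith⟩)
      · -- n = 0
        rcases eq_or_lt_of_le h1 with he | hlt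
        · have hz : z = xv - r := by linarith
          exact Or.inr (by simp [hz])
        · exact Or.inl (Or.inr ⟨by linarith, le_min (by linarith) (by linarith)⟩)
      · -- n = 1 : forces xv = xu and z = xu + 1 - r
        have hvu : xv = xu := le_antisymm (by linarith) hle
        have hz : z = xu + 1 - r := le_antisymm (by linarith) (by rw [← hvu]; linarith)
        exact Or.inr (by simp [hz])
  have hvolT : volume (S ∩ Set.Ioc (xu - r) (xu - r + 1)) = volume T := by
    refine le_antisymm ?_ (measure_mono hTsub)
    have hnull : volume ({xu + 1 - r, xv - r} : Set ℝ) = 0 :=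
      Set.Finite.measure_zero (Set.toFinite _) volume
    calc volume (S ∩ Set.Ioc (xu - r) (xu - r + 1))
        ≤ volume (T ∪ {xu + 1 - r, xv - r}) := measure_mono hsub2
    _ ≤ volume T + volume ({xu + 1 - r, xv - r} : Set ℝ) := measure_union_le _ _
    _ = volume T := by rw [hnull, add_zero]
  -- Step 5: compute volume T by cases
  have hvolT2 : volume T = ENNReal.ofReal (min (2 * r + dL xu xv) (4 * r)) := by
    rcases le_or_gt (xv - xu) (1 - 2*r) with hd12 | hd12
    · -- no wrap : m = xv + r
      have hmeq : m = xv + r := min_eq_left (by linarith)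
      rcases le_or_gt (xv - xu) (2*r) with hd2 | hd2
      · -- Shape A : overlapping intervals
        have hhalf : xv - xu ≤ 1/2 := by
          rcases le_total r (1/4) with h | h <;> linarith
        have hdLeq : dL xu xv = xv - xu := by
          rw [hdL]; exact min_eq_left (by linarith)
        have hunion : T = Set.Ioc (xu - r) (xv + r) := by
          have hmin : (xu - r) ⊓ (xv - r) = xu - r := min_eq_left (by linarith)
          have hmax : (xu + r) ⊔ (xv + r) = xv + r := max_eq_right (by linarith)
          rw [hT, hmeq, Set.Ioc_union_Ioc
            (le_trans inf_le_left (le_trans (by linarith : xu - r ≤ xv + r) le_sup_right))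
            (le_trans inf_le_left (le_trans (by linarith : xv - r ≤ xu + r) le_sup_right)),
            hmin, hmax]
        rw [hunion, Real.volume_Ioc, hdLeq, min_eq_left (by linarith)]
        congr 1; ring
      · -- Shape B : disjoint intervals, total 4r
        have hdisj : Disjoint (Set.Ioc (xu - r) (xu + r)) (Set.Ioc (xv - r) m) := by
          rw [Set.Ioc_disjoint_Ioc]
          exact le_trans (le_trans inf_le_left (by linarith)) le_sup_right
        have hdlge : 2 * r ≤ dL xu xv := by
          rw [hdL]; exact le_min (by linarith) (by linarith)
        rw [hT, measure_union hdisj measurableSet_Ioc, hmeq, Real.volume_Ioc,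
          Real.volume_Ioc, min_eq_right (by linarith),
          ← ENNReal.ofReal_add (by linarith) (by linarith)]
        congr 1; ring
    · -- wrap case (Shape C) : m = xu + 1 - r
      have hhalf : 1/2 < xv - xu := by
        by_contra h
        push_neg at h
        rw [hdL, min_eq_left (by linarith)] at hx
        linarith
      have hdLeq : dL xu xv = 1 - (xv - xu) := by
        rw [hdL]; exact min_eq_right (by linarith)
      have h2r : 2 * r ≤ xv - xu := by
        rw [hdLeq] at hx; linarith
      have hmeq : m = xu + 1 - r := min_eq_right (by linarith)
      have hdisj : Disjoint (Set.Ioc (xu - r) (xu + r)) (Set.Ioc (xv - r) m) := by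
        rw [Set.Ioc_disjoint_Ioc]
        exact le_trans (le_trans inf_le_left (by linarith)) le_sup_right
      rw [hT, measure_union hdisj measurableSet_Ioc, hmeq, Real.volume_Ioc,
        Real.volume_Ioc, hdLeq, min_eq_left (by linarith),
        ← ENNReal.ofReal_add (by linarith) (by linarith)]
      congr 1; ring
  rw [hset, hIcc, hwin, hvolT, hvolT2]

/-- measure of the union of two circular balls of radius `r`
centered at `x_u` and `x_v` (complement of Motif 4). -/
theorem gbm_union_ball_measure (xu xv r : ℝ)
    (hxu : xu ∈ Set.Icc (0 : ℝ) 1) (hxv : xv ∈ Set.Icc (0 : ℝ) 1)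
    (hr : r ∈ Set.Icc (0 : ℝ) (1 / 2))
    (hx : dL xu xv + 2 * r ≤ 1) :
    volume {z : ℝ | z ∈ Set.Icc (0 : ℝ) 1 ∧ (dL z xu ≤ r ∨ dL z xv ≤ r)}
      = ENNReal.ofReal (min (2 * r + dL xu xv) (4 * r)) ∧
    (dL xu xv ≤ 2 * r →
      volume {z : ℝ | z ∈ Set.Icc (0 : ℝ) 1 ∧ (dL z xu ≤ r ∨ dL z xv ≤ r)}
        = ENNReal.ofReal (2 * r + dL xu xv)) ∧
    (2 * r < dL xu xv →
      volume {z : ℝ | z ∈ Set.Icc (0 : ℝ) 1 ∧ (dL z xu ≤ r ∨ dL z xv ≤ r)}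
        = ENNReal.ofReal (4 * r)) := by
  obtain ⟨h0u, h1u⟩ := hxu
  obtain ⟨h0v, h1v⟩ := hxv
  obtain ⟨hr0, hr2⟩ := hr
  have hmain : volume {z : ℝ | z ∈ Set.Icc (0 : ℝ) 1 ∧ (dL z xu ≤ r ∨ dL z xv ≤ r)}
      = ENNReal.ofReal (min (2 * r + dL xu xv) (4 * r)) := by
    rcases le_total xu xv with h | h
    · exact gbm_key xu xv r h0u h1u h0v h1v hr0 hr2 h hx
    · have hswap : {z : ℝ | z ∈ Set.Icc (0 : ℝ) 1 ∧ (dL z xu ≤ r ∨ dL z xv ≤ r)}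
          = {z : ℝ | z ∈ Set.Icc (0 : ℝ) 1 ∧ (dL z xv ≤ r ∨ dL z xu ≤ r)} := by
        ext z; exact and_congr_right fun _ => or_comm
      rw [hswap, dL_comm xu xv]
      exact gbm_key xv xu r h0v h1v h0u h1u hr0 hr2 h (by rwa [dL_comm xv xu])
  exact ⟨hmain,
    fun h => by rw [hmain, min_eq_left (by linarith)],
    fun h => by rw [hmain, min_eq_right (by linarith)]⟩
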